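/- Let Γ be a ℤ^d-periodic graph with fundamental domain W = [n]. For every permutation σ of [n], the generic support of σD(z,λ) is contained in the generic support of D(z,λ); that is, A(σD(z,λ)) ⊆ A(D(z,λ)) ⊂ ℤ^{d+1}. -/

import Mathlib

open scoped Classical Polynomial

noncomputable section

/-- A `ℤ^d`-periodic graph (with no self-loops or multiple edges), given by a
fundamental domain `[n] = Fin n` together with, for each pair `i j` of vertices
of the fundamental domain, the finite set `edges i j ⊆ ℤ^d` of those `a` such
that there is an edge between the vertex `(i,0)` and the vertex `(j,a)`.
The full vertex set is `Fin n × ℤ^d`, with `ℤ^d` acting by translation on the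
second coordinate. -/
structure PeriodicGraph (d n : ℕ) where
  edges : Fin n → Fin n → Finset (Fin d → ℤ)
  symm : ∀ i j a, a ∈ edges i j ↔ -a ∈ edges j i
  no_loop : ∀ i, (0 : Fin d → ℤ) ∉ edges i i

namespace PeriodicGraph

variable {d n : ℕ}

/-- Vertices of the periodic graph: pairs `(i, a)` with `i` in the fundamental
domain and `a ∈ ℤ^d`. -/
abbrev Vertex (d n : ℕ) := Fin n × (Fin d → ℤ)

/-- Adjacency in the full `ℤ^d`-periodic graph. -/
def Adj (G : PeriodicGraph d n) (u v : Vertex d n) : Prop :=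
  (v.2 - u.2) ∈ G.edges u.1 v.1

/-- The periodic graph is connected. -/
def Connected (G : PeriodicGraph d n) : Prop :=
  ∀ u v : Vertex d n, Relation.ReflTransGen G.Adj u v

/-- Directed edges (up to translation): triples `(i, j, a)` so that there is an
edge from `(i,0)` to `(j,a)`. -/
def DirEdge (G : PeriodicGraph d n) : Type :=
  {x : Fin n × Fin n × (Fin d → ℤ) // x.2.2 ∈ G.edges x.1 x.2.1}

/-- Reversal of a directed edge. -/
def flipEdge (G : PeriodicGraph d n) (x : G.DirEdge) : G.DirEdge :=
  ⟨(x.1.2.1, x.1.1, -x.1.2.2), (G.symm _ _ _).mp x.2⟩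

lemma flipEdge_flipEdge (G : PeriodicGraph d n) (x : G.DirEdge) :
    G.flipEdge (G.flipEdge x) = x := by
  obtain ⟨⟨i, j, a⟩, hx⟩ := x
  simp [flipEdge]
  rfl

/-- The setoid identifying a directed edge with its reversal; an (undirected)
edge label variable `e_{(i,j),a} = e_{(j,i),-a}` corresponds to an equivalence
class. -/
def edgeSetoid (G : PeriodicGraph d n) : Setoid G.DirEdge where
  r x y := y = x ∨ y = G.flipEdge x
  iseqv := by
    constructor
    · intro x; exact Or.inl rfl
    · rintro x y (rfl | rfl)
      · exact Or.inl rfl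
      · right; rw [flipEdge_flipEdge]
    · rintro x y z (rfl | rfl) h
      · exact h
      · rcases h with rfl | rfl
        · exact Or.inr rfl
        · left; rw [flipEdge_flipEdge]

/-- Edge-label variables: unordered edges of the quotient graph. -/
abbrev EdgeVar (G : PeriodicGraph d n) : Type := Quotient G.edgeSetoid

/-- The index type for the variables of the labeling space `ℂ^{V,E}`:
one potential variable `v_i` for each vertex `i` of the fundamental domain,
and one edge-label variable for each (undirected) edge of the quotient. -/
abbrev VarIdx (G : PeriodicGraph d n) : Type := Fin n ⊕ G.EdgeVar

/-- The labeling space `ℂ^{V,E}`. -/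
abbrev Labeling (G : PeriodicGraph d n) : Type := G.VarIdx → ℂ

/-- The edge variable attached to a directed edge. -/
def edgeVar (G : PeriodicGraph d n) (i j : Fin n) (a : Fin d → ℤ)
    (h : a ∈ G.edges i j) : G.VarIdx :=
  Sum.inr (Quotient.mk G.edgeSetoid ⟨(i, j, a), h⟩)

/-- The ring `ℂ[z^{±1}]` of complex Laurent polynomials in `z = (z_1,…,z_d)`. -/
abbrev LaurentC (d : ℕ) : Type := AddMonoidAlgebra ℂ (Fin d → ℤ)

/-- The universal coefficient ring `ℂ[v,e]`: polynomials in the potential and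
edge-label variables. -/
abbrev CoeffRing (G : PeriodicGraph d n) : Type := MvPolynomial G.VarIdx ℂ

/-- Laurent polynomials in `z` with coefficients in `ℂ[v,e]`. -/
abbrev LaurentU (G : PeriodicGraph d n) : Type :=
  AddMonoidAlgebra G.CoeffRing (Fin d → ℤ)

/-- The Floquet matrix `L(z)` at a fixed labeling `x ∈ ℂ^{V,E}`:
`L(z)_{i,j} = δ_{ij} v_i + ∑_{a : (i,j+a) ∈ ℰ} e_{(i,j),a} z^a`. -/
def floquet (G : PeriodicGraph d n) (x : G.Labeling) :
    Matrix (Fin n) (Fin n) (LaurentC d) := fun i j =>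
  (if i = j then AddMonoidAlgebra.single 0 (x (Sum.inl i)) else 0) +
    ∑ a ∈ (G.edges i j).attach,
      AddMonoidAlgebra.single a.1 (x (G.edgeVar i j a.1 a.2))

/-- The universal Floquet matrix `L(z)`, with the potentials and edge labels
treated as indeterminates. -/
def floquetU (G : PeriodicGraph d n) :
    Matrix (Fin n) (Fin n) G.LaurentU := fun i j =>
  (if i = j then AddMonoidAlgebra.single 0 (MvPolynomial.X (Sum.inl i)) else 0) +
    ∑ a ∈ (G.edges i j).attach,
      AddMonoidAlgebra.single a.1 (MvPolynomial.X (G.edgeVar i j a.1 a.2))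

/-- The matrix `L(z) - λ I` at a fixed labeling, as a matrix of polynomials in
`λ` over `ℂ[z^{±1}]`. -/
def dispMat (G : PeriodicGraph d n) (x : G.Labeling) :
    Matrix (Fin n) (Fin n) (Polynomial (LaurentC d)) := fun i j =>
  Polynomial.C (G.floquet x i j) - if i = j then Polynomial.X else 0

/-- The universal matrix `L(z) - λ I`. -/
def dispMatU (G : PeriodicGraph d n) :
    Matrix (Fin n) (Fin n) (Polynomial G.LaurentU) := fun i j =>
  Polynomial.C (G.floquetU i j) - if i = j then Polynomial.X else 0

/-- The dispersion polynomial `D(z,λ) = det (L(z) - λ I)` at a fixed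
labeling, an element of `ℂ[z^{±1}][λ]`. -/
def disp (G : PeriodicGraph d n) (x : G.Labeling) : Polynomial (LaurentC d) :=
  (G.dispMat x).det

/-- The universal dispersion polynomial `D(v,e,z,λ) = det (L(z) - λ I)`,
an element of `ℂ[v,e][z^{±1}][λ]`. -/
def dispU (G : PeriodicGraph d n) : Polynomial G.LaurentU :=
  G.dispMatU.det

/-- `σD(z,λ) = ∏ i, (L(z) - λI)_{i, σ(i)}` at a fixed labeling. -/
def permProd (G : PeriodicGraph d n) (x : G.Labeling) (σ : Equiv.Perm (Fin n)) :
    Polynomial (LaurentC d) :=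
  ∏ i, G.dispMat x i (σ i)

/-- The universal `σD(v,e,z,λ) = ∏ i, (L(z) - λI)_{i, σ(i)}`. -/
def permProdU (G : PeriodicGraph d n) (σ : Equiv.Perm (Fin n)) :
    Polynomial G.LaurentU :=
  ∏ i, G.dispMatU i (σ i)

/-- The support `𝒜(g) ⊆ ℤ^d × ℕ` of `g ∈ ℂ[z^{±1}][λ]`: the set of pairs
`(a, b)` such that the monomial `z^a λ^b` has nonzero coefficient. -/
def suppC (g : Polynomial (LaurentC d)) : Set ((Fin d → ℤ) × ℕ) :=
  {p | (g.coeff p.2).coeff p.1 ≠ 0}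

/-- The generic support `A(f) ⊆ ℤ^d × ℕ` of `f ∈ ℂ[v,e][z^{±1}][λ]`: the set
of `(a,b)` such that the coefficient `c_{a,b}(v,e)` of `z^a λ^b` is a nonzero
polynomial in `(v,e)` (equivalently, such that `(a,b)` is in the support of the
specialization of `f` at a generic labeling). -/
def genSupp {G : PeriodicGraph d n} (f : Polynomial G.LaurentU) :
    Set ((Fin d → ℤ) × ℕ) :=
  {p | (f.coeff p.2).coeff p.1 ≠ 0}

/-- The full support `𝒜(f) ⊆ ℤ^d × ℕ × ℕ^{V,E}` of `f ∈ ℂ[v,e][z^{±1}][λ]`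
as a polynomial in all the variables `z, λ, v, e`: the set of triples
`(r₁, r₂, r₃)` such that the monomial `z^{r₁} λ^{r₂} (v,e)^{r₃}` appears in `f`
with nonzero coefficient. -/
def fullSupp {G : PeriodicGraph d n} (f : Polynomial G.LaurentU) :
    Set ((Fin d → ℤ) × ℕ × (G.VarIdx →₀ ℕ)) :=
  {r | MvPolynomial.coeff r.2.2 ((f.coeff r.2.1).coeff r.1) ≠ 0}

/-- The embedding `ℤ^d × ℕ → ℝ^{d+1}` of exponent vectors. -/
def toPt (p : (Fin d → ℤ) × ℕ) : (Fin d → ℝ) × ℝ :=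
  (fun i => (p.1 i : ℝ), (p.2 : ℝ))

/-- The generic Newton polytope `N(f) ⊆ ℝ^{d+1}` of `f ∈ ℂ[v,e][z^{±1}][λ]`:
the convex hull of the generic support. -/
def newton {G : PeriodicGraph d n} (f : Polynomial G.LaurentU) :
    Set ((Fin d → ℝ) × ℝ) :=
  convexHull ℝ (toPt '' genSupp f)

/-- The pairing `w · p` of a weight `w ∈ ℤ^{d+1}` with an exponent vector
`p ∈ ℤ^d × ℕ`. -/
def dotZ (w : (Fin d → ℤ) × ℤ) (p : (Fin d → ℤ) × ℕ) : ℤ :=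
  (∑ i, w.1 i * p.1 i) + w.2 * (p.2 : ℤ)

/-- The pairing `w · q` of a weight `w ∈ ℤ^{d+1}` with a point `q ∈ ℝ^{d+1}`. -/
def dotR (w : (Fin d → ℤ) × ℤ) (q : (Fin d → ℝ) × ℝ) : ℝ :=
  (∑ i, (w.1 i : ℝ) * q.1 i) + (w.2 : ℝ) * q.2

/-- The face `N(f)_w` of the generic Newton polytope identified by the weight
`w`: the set of points of `N(f)` on which `w · ·` is minimized. -/
def face {G : PeriodicGraph d n} (f : Polynomial G.LaurentU)
    (w : (Fin d → ℤ) × ℤ) : Set ((Fin d → ℝ) × ℝ) :=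
  {q ∈ newton f | ∀ q' ∈ newton f, dotR w q ≤ dotR w q'}

/-- A set in `ℝ^{d+1}` is vertical if it contains two points `(a,b)` and
`(a,c)` with `b ≠ c`. -/
def IsVertical (F : Set ((Fin d → ℝ) × ℝ)) : Prop :=
  ∃ (a : Fin d → ℝ) (b c : ℝ), b ≠ c ∧ (a, b) ∈ F ∧ (a, c) ∈ F

/-- A set in `ℝ^{d+1}` is a vertical segment if it is a (one-dimensional)
segment and is vertical. -/
def IsVerticalSegment (F : Set ((Fin d → ℝ) × ℝ)) : Prop :=
  (∃ p q : (Fin d → ℝ) × ℝ, p ≠ q ∧ F = segment ℝ p q) ∧ IsVertical F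

/-- `U ⊆ [n]` is a component of the fundamental domain: no edge of `Γ` joins
the `ℤ^d`-orbit of `U` to the `ℤ^d`-orbit of its complement. -/
def IsComponent (G : PeriodicGraph d n) (U : Set (Fin n)) : Prop :=
  ∀ i ∈ U, ∀ j, j ∉ U → G.edges i j = ∅

/-- A fundamental domain of `Γ` is determined by shifts `t i ∈ ℤ^d` of the
vertices of the standard fundamental domain (it is `{(i, t i) : i ∈ [n]}`).
`SupportZeroOn G t U` says that the subset `{(i, t i) : i ∈ U}` of that
fundamental domain has support `0`: every edge between the orbits of vertices
of `U` joins `(i, t i)` to `(j, t j)` with shift `a = 0`. -/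
def SupportZeroOn (G : PeriodicGraph d n) (t : Fin n → (Fin d → ℤ))
    (U : Set (Fin n)) : Prop :=
  ∀ i ∈ U, ∀ j ∈ U, ∀ a ∈ G.edges i j, a = t j - t i

/-- `Γ` has a fundamental domain of support `0`. -/
def HasSupportZeroFD (G : PeriodicGraph d n) : Prop :=
  ∃ t : Fin n → (Fin d → ℤ), G.SupportZeroOn t Set.univ

/-- `Γ` has a fundamental domain with a nonempty component of support `0`. -/
def HasSupportZeroComponent (G : PeriodicGraph d n) : Prop :=
  ∃ (t : Fin n → (Fin d → ℤ)) (U : Set (Fin n)),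
    U.Nonempty ∧ G.IsComponent U ∧ G.SupportZeroOn t U

/-- A subset of the labeling space `ℂ^{V,E}` is algebraic if it is the common
zero locus of a family of polynomials in the variables `(v,e)`. -/
def IsAlgebraicSet {ι : Type*} (S : Set (ι → ℂ)) : Prop :=
  ∃ P : Set (MvPolynomial ι ℂ), S = {x | ∀ p ∈ P, MvPolynomial.eval x p = 0}

/-- A property of labelings holds generically if it holds outside some proper
algebraic subset of the labeling space (i.e., on a nonempty Zariski-open set). -/
def Generic {ι : Type*} (P : (ι → ℂ) → Prop) : Prop :=
  ∃ S : Set (ι → ℂ), IsAlgebraicSet S ∧ S ≠ Set.univ ∧ ∀ x ∉ S, P x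

/-- `g ∈ ℂ[z^{±1}][λ]` has a linear factor in `λ`. -/
def HasLinearFactor (g : Polynomial (LaurentC d)) : Prop :=
  ∃ lam : ℂ, (Polynomial.X - Polynomial.C (algebraMap ℂ (LaurentC d) lam)) ∣ g



/-- The dispersion polynomial `D|_U(z,λ) = det (L|_U(z) - λI)` of the induced
periodic operator on the induced subgraph `Γ_U`, for `U ⊆ [n]`, at a fixed
labeling (the Floquet matrix of the induced operator is the corresponding
principal submatrix of `L(z)`). -/
def dispSub (G : PeriodicGraph d n) (x : G.Labeling) (U : Finset (Fin n)) :
    Polynomial (LaurentC d) :=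
  (Matrix.det (fun i j : {i // i ∈ U} =>
    Polynomial.C (G.floquet x i.1 j.1) - if i = j then Polynomial.X else 0))

/-- Restriction of a Laurent polynomial to the monomials satisfying a
predicate. -/
def laurFilter (p : (Fin d → ℤ) → Prop) (g : LaurentC d) : LaurentC d :=
  AddMonoidAlgebra.ofCoeff (Finsupp.filter p (g.coeff : (Fin d → ℤ) →₀ ℂ))

/-- The facial polynomial `g_w` of `g ∈ ℂ[z^{±1}][λ]`: the sum of the terms of
`g` whose exponent vectors minimize `w · ·` over the support of `g`. -/
def facialC (w : (Fin d → ℤ) × ℤ) (g : Polynomial (LaurentC d)) :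
    Polynomial (LaurentC d) :=
  ∑ b ∈ g.support,
    Polynomial.C (laurFilter
      (fun a => ∀ q ∈ suppC g, dotZ w (a, b) ≤ dotZ w q) (g.coeff b)) *
      Polynomial.X ^ b

/-- The monomial `z^a` in `ℂ[z^{±1}]`. -/
def zMon (a : Fin d → ℤ) : LaurentC d := AddMonoidAlgebra.single a 1

/-- The Sylvester matrix of two polynomials `f, g ∈ R[λ]` (with respect to
their natural degrees `s = deg f` and `t = deg g`): a `(t+s) × (t+s)` matrix
whose first `t` rows are the shifted coefficient sequences of `f` and whose
last `s` rows are the shifted coefficient sequences of `g`. -/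
def sylvester {R : Type*} [CommRing R] (f g : Polynomial R) :
    Matrix (Fin (g.natDegree + f.natDegree)) (Fin (g.natDegree + f.natDegree)) R :=
  fun r c =>
    if (r : ℕ) < g.natDegree then
      (if (r : ℕ) ≤ (c : ℕ) then f.coeff ((c : ℕ) - (r : ℕ)) else 0)
    else
      (if ((r : ℕ) - g.natDegree) ≤ (c : ℕ) then
        g.coeff ((c : ℕ) - ((r : ℕ) - g.natDegree)) else 0)

/-- The resultant of two polynomials in `λ`: the determinant of their
Sylvester matrix. -/
def resultant {R : Type*} [CommRing R] (f g : Polynomial R) : R :=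
  (sylvester f g).det

/-- The simplified quotient graph `S(Γ/ℤ^d)`: the finite simple graph on the
fundamental domain `[n]` with an edge between `i ≠ j` whenever some edge of `Γ`
joins the orbits of `i` and `j`. -/
def simpleQuotient (G : PeriodicGraph d n) : SimpleGraph (Fin n) where
  Adj i j := i ≠ j ∧ (G.edges i j).Nonempty
  symm := ⟨by
    rintro i j ⟨hij, a, ha⟩
    exact ⟨hij.symm, ⟨-a, (G.symm i j a).mp ha⟩⟩⟩
  loopless := ⟨fun i h => h.1 rfl⟩

/-- A property of potentials `(v_1,…,v_n) ∈ ℂ^n` holds generically if it holds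
outside a proper algebraic subset of `ℂ^n`. -/
def GenericPot (P : (Fin n → ℂ) → Prop) : Prop :=
  ∃ S : Set (Fin n → ℂ), IsAlgebraicSet S ∧ S ≠ Set.univ ∧ ∀ x ∉ S, P x

end PeriodicGraph


set_option linter.unusedSectionVars false

namespace PermSignAux

open Equiv Equiv.Perm

variable {β : Type*} [Fintype β] [DecidableEq β]

/-- The set of undirected edges `{i, σ i}` for moved points `i`. -/
def Eset (σ : Perm β) : Set (Sym2 β) := {e | ∃ i, σ i ≠ i ∧ e = s(i, σ i)}

lemma Perm.apply_inv_self (f : Perm β) (x : β) : f (f⁻¹ x) = x := f.apply_symm_apply x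

lemma Perm.inv_apply_self (f : Perm β) (x : β) : f⁻¹ (f x) = x := f.symm_apply_apply x

lemma Perm.sameCycle_inv_apply_right {f : Perm β} {x y : β} :
    SameCycle f x (f⁻¹ y) ↔ SameCycle f x y := Perm.sameCycle_symm_apply_right

lemma mem_Eset (σ : Perm β) {i : β} (h : σ i ≠ i) : s(i, σ i) ∈ Eset σ := ⟨i, h, rfl⟩

lemma Eset_inv (σ : Perm β) : Eset σ⁻¹ = Eset σ := by
  ext e
  constructor
  · rintro ⟨i, hi, rfl⟩
    refine ⟨σ⁻¹ i, ?_, ?_⟩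
    · rw [Perm.apply_inv_self]; exact fun hc => hi hc.symm
    · rw [Perm.apply_inv_self]; exact Sym2.eq_swap
  · rintro ⟨i, hi, rfl⟩
    refine ⟨σ i, ?_, ?_⟩
    · rw [Perm.inv_apply_self]; exact fun hc => hi hc.symm
    · rw [Perm.inv_apply_self]; exact Sym2.eq_swap

lemma stepA {σ τ : Perm β} (h : Eset σ ⊆ Eset τ) {i : β} (hi : σ i ≠ i) :
    τ i = σ i ∨ τ (σ i) = i := by
  obtain ⟨j, hj, he⟩ := h (mem_Eset σ hi)
  rcases Sym2.eq_iff.mp he with ⟨h1, h2⟩ | ⟨h1, h2⟩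
  · left; rw [← h1] at h2; exact h2.symm
  · right; rw [h2, ← h1]

lemma stepA' {σ τ : Perm β} (h : Eset τ ⊆ Eset σ) {i : β} (hi : τ i ≠ i) :
    τ i = σ i ∨ τ i = σ⁻¹ i := by
  obtain ⟨j, hj, he⟩ := h (mem_Eset τ hi)
  rcases Sym2.eq_iff.mp he with ⟨h1, h2⟩ | ⟨h1, h2⟩
  · left; rw [← h1] at h2; exact h2
  · right; rw [h2, h1, Perm.inv_apply_self]

lemma moved {σ τ : Perm β} (h : Eset σ ⊆ Eset τ) {i : β} (hi : σ i ≠ i) : τ i ≠ i := by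
  rcases stepA h hi with h1 | h1
  · rw [h1]; exact hi
  · intro hc
    exact hi (τ.injective (by rw [h1, hc]))

lemma nomix {σ τ : Perm β} (h : Eset σ ⊆ Eset τ) {x : β} (h1 : σ x ≠ x)
    (h2 : σ (σ x) ≠ x) (h3 : τ x = σ x) : τ (σ x) = σ (σ x) := by
  have hσx : σ (σ x) ≠ σ x := fun e => h1 (σ.injective e)
  rcases stepA h hσx with hc | hc
  · exact hc
  · exact absurd (τ.injective (by rw [hc, h3])) (fun e => h2 e.symm)

lemma comm_pt (σ : Perm β) (m : ℕ) (y : β) : σ ((σ ^ m) y) = (σ ^ m) (σ y) := by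
  rw [← Perm.mul_apply, ← Perm.mul_apply, ← pow_succ', ← pow_succ]

lemma agree_of_start {σ τ : Perm β} (h : Eset σ = Eset τ) {i₀ : β}
    (hm : σ i₀ ≠ i₀) (h2 : σ (σ i₀) ≠ i₀) (hstart : τ i₀ = σ i₀) :
    ∀ x, SameCycle σ i₀ x → τ x = σ x := by
  have key : ∀ m : ℕ, τ ((σ ^ m) i₀) = σ ((σ ^ m) i₀) := by
    intro m
    induction m with
    | zero => simpa using hstart
    | succ m ihm =>
        set x := (σ ^ m) i₀ with hxdef
        have hcomm1 : σ x = (σ ^ m) (σ i₀) := comm_pt σ m i₀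
        have hcomm2 : σ (σ x) = (σ ^ m) (σ (σ i₀)) := by
          rw [hcomm1, comm_pt σ m (σ i₀)]
        have hx1 : σ x ≠ x := by
          rw [hcomm1, hxdef]; exact fun e => hm ((σ ^ m).injective e)
        have hx2 : σ (σ x) ≠ x := by
          rw [hcomm2, hxdef]; exact fun e => h2 ((σ ^ m).injective e)
        have hthis := nomix h.subset hx1 hx2 ihm
        rw [pow_succ, Perm.mul_apply, ← hcomm1, hthis]
  intro x hx
  obtain ⟨m, _, rfl⟩ := hx.exists_pow_eq'
  exact key m

lemma agree_two {σ τ : Perm β} (h : Eset σ = Eset τ) {i₀ : β}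
    (hm : σ i₀ ≠ i₀) (h2 : σ (σ i₀) = i₀) :
    ∀ x, SameCycle σ i₀ x → τ x = σ x := by
  have gen : ∀ x : β, σ x ≠ x → σ (σ x) = x → τ x = σ x := by
    intro x hx hxx
    have hτx : τ x ≠ x := moved h.subset hx
    rcases stepA' h.symm.subset hτx with hc | hc
    · exact hc
    · rw [hc]
      exact σ.injective (by rw [Perm.apply_inv_self, hxx])
  have horb : ∀ m : ℕ, (σ ^ m) i₀ = i₀ ∨ (σ ^ m) i₀ = σ i₀ := by
    intro m
    induction m with
    | zero => left; rfl
    | succ m ihm =>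
        rcases ihm with hc | hc
        · right; rw [pow_succ', Perm.mul_apply, hc]
        · left; rw [pow_succ', Perm.mul_apply, hc, h2]
  intro x hx
  obtain ⟨m, _, rfl⟩ := hx.exists_pow_eq'
  rcases horb m with hc | hc <;> rw [hc]
  · exact gen i₀ hm h2
  · refine gen (σ i₀) (fun e => hm (σ.injective e)) (by rw [h2])

lemma dichotomy {σ τ : Perm β} (h : Eset σ = Eset τ) {i₀ : β} (hm : σ i₀ ≠ i₀) :
    ∃ ρ : Perm β, (ρ = σ ∨ ρ = σ⁻¹) ∧ ∀ x, SameCycle σ i₀ x → τ x = ρ x := by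
  by_cases h2 : σ (σ i₀) = i₀
  · exact ⟨σ, Or.inl rfl, agree_two h hm h2⟩
  · have hτ : τ i₀ ≠ i₀ := moved h.subset hm
    rcases stepA' h.symm.subset hτ with hs | hs
    · exact ⟨σ, Or.inl rfl, agree_of_start h hm h2 hs⟩
    · refine ⟨σ⁻¹, Or.inr rfl, ?_⟩
      have hE : Eset σ⁻¹ = Eset τ := (Eset_inv σ).symm ▸ h
      have hm' : σ⁻¹ i₀ ≠ i₀ := fun e => hm (by conv_lhs => rw [← e, Perm.apply_inv_self])
      have h2' : σ⁻¹ (σ⁻¹ i₀) ≠ i₀ := by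
        intro e
        apply h2
        have := congrArg (σ ∘ σ) e
        simpa using this.symm
      intro x hx
      exact agree_of_start hE hm' h2' hs x (Perm.sameCycle_inv.mpr hx)

lemma pow_agree {σ τ ρ : Perm β} {i₀ : β}
    (hag : ∀ x, SameCycle σ i₀ x → τ x = ρ x)
    (hcycρ : ∀ y, SameCycle ρ i₀ y ↔ SameCycle σ i₀ y) :
    ∀ m : ℕ, (τ ^ m) i₀ = (ρ ^ m) i₀ := by
  intro m
  induction m with
  | zero => rfl
  | succ m ihm =>
      have h1 : SameCycle ρ i₀ ((ρ ^ m) i₀) := ⟨(m : ℤ), by rw [zpow_natCast]⟩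
      rw [pow_succ', Perm.mul_apply, ihm, hag _ ((hcycρ _).mp h1), ← Perm.mul_apply,
        ← pow_succ']

lemma sameCycle_tau {σ τ ρ : Perm β} {i₀ : β}
    (hag : ∀ x, SameCycle σ i₀ x → τ x = ρ x)
    (hcycρ : ∀ y, SameCycle ρ i₀ y ↔ SameCycle σ i₀ y) :
    ∀ y, SameCycle τ i₀ y ↔ SameCycle σ i₀ y := by
  intro y
  constructor
  · intro hy
    obtain ⟨m, _, rfl⟩ := hy.exists_pow_eq'
    rw [pow_agree hag hcycρ m]
    exact (hcycρ _).mp ⟨(m : ℤ), by rw [zpow_natCast]⟩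
  · intro hy
    obtain ⟨m, _, rfl⟩ := ((hcycρ y).mpr hy).exists_pow_eq'
    rw [← pow_agree hag hcycρ m]
    exact ⟨(m : ℤ), by rw [zpow_natCast]⟩

lemma cycleOf_tau {σ τ ρ : Perm β} {i₀ : β}
    (hag : ∀ x, SameCycle σ i₀ x → τ x = ρ x)
    (hcycρ : ∀ y, SameCycle ρ i₀ y ↔ SameCycle σ i₀ y) :
    cycleOf τ i₀ = cycleOf ρ i₀ := by
  ext y
  rw [cycleOf_apply, cycleOf_apply]
  by_cases hy : SameCycle σ i₀ y
  · rw [if_pos ((sameCycle_tau hag hcycρ y).mpr hy), if_pos ((hcycρ y).mpr hy), hag y hy]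
  · rw [if_neg (fun hc => hy ((sameCycle_tau hag hcycρ y).mp hc)),
      if_neg (fun hc => hy ((hcycρ y).mp hc))]

lemma cycleOf_inv' (σ : Perm β) (p : β) {i1 : DecidableRel (Equiv.Perm.SameCycle σ⁻¹)}
    {i2 : DecidableRel σ.SameCycle} :
    @cycleOf β σ⁻¹ i1 p = (@cycleOf β σ i2 p)⁻¹ := by
  haveI := i1; haveI := i2
  ext y
  rw [Perm.eq_inv_iff_eq, @cycleOf_apply β σ⁻¹ i1 p y]
  by_cases hS : SameCycle σ p y
  · rw [if_pos (Perm.sameCycle_inv.mpr hS), @cycleOf_apply β σ i2,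
      if_pos (by rwa [Perm.sameCycle_inv_apply_right]), Perm.apply_inv_self]
  · rw [if_neg (fun hc => hS (Perm.sameCycle_inv.mp hc)), @cycleOf_apply β σ i2, if_neg hS]

lemma primeApply (π : Perm β) (p : β) (x : β) :
    (π * (cycleOf π p)⁻¹) x = if SameCycle π p x then x else π x := by
  rw [Perm.mul_apply, ← cycleOf_inv', cycleOf_apply]
  by_cases hS : SameCycle π p x
  · rw [if_pos (Perm.sameCycle_inv.mpr hS), if_pos hS, Perm.apply_inv_self]
  · rw [if_neg (fun hc => hS (Perm.sameCycle_inv.mp hc)), if_neg hS]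

lemma Eset_prime_subset {σ τ : Perm β} {i₀ : β} (h : Eset σ = Eset τ)
    (hcyc : ∀ y, SameCycle σ i₀ y ↔ SameCycle τ i₀ y) :
    Eset (σ * (cycleOf σ i₀)⁻¹) ⊆ Eset (τ * (cycleOf τ i₀)⁻¹) := by
  rintro e ⟨x, hx, rfl⟩
  have hfx := primeApply σ i₀ x
  by_cases hS : SameCycle σ i₀ x
  · rw [hfx, if_pos hS] at hx; exact absurd rfl hx
  rw [hfx, if_neg hS] at hx ⊢
  obtain ⟨y, hy, hey⟩ : s(x, σ x) ∈ Eset τ := h ▸ mem_Eset σ hx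
  have hyS : ¬ SameCycle σ i₀ y := by
    rcases Sym2.eq_iff.mp hey with ⟨h1, _⟩ | ⟨_, h2⟩
    · rw [← h1]; exact hS
    · rw [← h2]; exact fun hc => hS (Perm.sameCycle_apply_right.mp hc)
  refine ⟨y, ?_, ?_⟩ <;>
    rw [primeApply τ i₀ y, if_neg (fun hc => hyS ((hcyc y).mpr hc))]
  · exact hy
  · exact hey

lemma eq_one_of_Eset_empty {τ : Perm β} (h : Eset τ = ∅) : τ = 1 := by
  ext y
  by_contra hy
  exact absurd (mem_Eset τ (by simpa using hy)) (by rw [h]; exact not_false)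

theorem sign_eq_of_Eset_eq_aux :
    ∀ (k : ℕ) (σ τ : Perm β), σ.support.card ≤ k →
      Eset σ = Eset τ → Perm.sign σ = Perm.sign τ := by
  intro k
  induction k with
  | zero =>
      intro σ τ hcard h
      have hσ : σ = 1 := by
        rw [← Perm.support_eq_empty_iff]
        exact Finset.card_eq_zero.mp (Nat.le_zero.mp hcard)
      subst hσ
      have hτ : τ = 1 := by
        apply eq_one_of_Eset_empty
        rw [← h]
        ext e; simp only [Eset, Set.mem_setOf_eq, Set.mem_empty_iff_false, iff_false]
        rintro ⟨i, hi, _⟩; exact hi rfl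
      rw [hτ]
  | succ k ih =>
      intro σ τ hcard h
      by_cases h1 : σ = 1
      · subst h1
        have hτ : τ = 1 := by
          apply eq_one_of_Eset_empty
          rw [← h]
          ext e; simp only [Eset, Set.mem_setOf_eq, Set.mem_empty_iff_false, iff_false]
          rintro ⟨i, hi, _⟩; exact hi rfl
        rw [hτ]
      · obtain ⟨i₀, hm⟩ : ∃ i₀, σ i₀ ≠ i₀ := by
          by_contra hc
          push_neg at hc
          exact h1 (Equiv.ext hc)
        obtain ⟨ρ, hρ, hag⟩ := dichotomy h hm
        have hcycρ : ∀ y, SameCycle ρ i₀ y ↔ SameCycle σ i₀ y := by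
          rcases hρ with h' | h'
          · rw [h']; exact fun y => Iff.rfl
          · rw [h']; exact fun y => Perm.sameCycle_inv
        have hscρ : Perm.sign (cycleOf ρ i₀) = Perm.sign (cycleOf σ i₀) := by
          rcases hρ with h' | h'
          · rw [h']
          · rw [h', cycleOf_inv', map_inv]
            exact inv_eq_of_mul_eq_one_left (Int.units_mul_self _)
        have hcyc : ∀ y, SameCycle σ i₀ y ↔ SameCycle τ i₀ y :=
          fun y => (sameCycle_tau hag hcycρ y).symm
        set σ' := σ * (cycleOf σ i₀)⁻¹ with hσ'def
        set τ' := τ * (cycleOf τ i₀)⁻¹ with hτ'def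
        have hE' : Eset σ' = Eset τ' :=
          Set.Subset.antisymm (Eset_prime_subset h hcyc)
            (Eset_prime_subset h.symm (fun y => (hcyc y).symm))
        have hsupp : σ'.support ⊆ σ.support.erase i₀ := by
          intro x hx
          rw [Perm.mem_support] at hx
          rw [primeApply σ i₀ x] at hx
          by_cases hS : SameCycle σ i₀ x
          · rw [if_pos hS] at hx; exact absurd rfl hx
          · rw [if_neg hS] at hx
            refine Finset.mem_erase.mpr ⟨?_, Perm.mem_support.mpr hx⟩
            intro hxe; rw [hxe] at hS; exact hS (Perm.SameCycle.refl σ i₀)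
        have hcard' : σ'.support.card ≤ k := by
          have h1' : σ'.support.card ≤ (σ.support.erase i₀).card :=
            Finset.card_le_card hsupp
          have h2' : (σ.support.erase i₀).card = σ.support.card - 1 :=
            Finset.card_erase_of_mem (Perm.mem_support.mpr hm)
          omega
        have hsign' : Perm.sign σ' = Perm.sign τ' := ih σ' τ' hcard' hE'
        have hcτ : cycleOf τ i₀ = cycleOf ρ i₀ := cycleOf_tau hag hcycρ
        have hsc : Perm.sign (cycleOf τ i₀) = Perm.sign (cycleOf σ i₀) := by
          rw [hcτ, hscρ]
        have hσeq : σ' * cycleOf σ i₀ = σ := by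
          rw [hσ'def, inv_mul_cancel_right]
        have hτeq : τ' * cycleOf τ i₀ = τ := by
          rw [hτ'def, inv_mul_cancel_right]
        have e1 : Perm.sign σ = Perm.sign σ' * Perm.sign (cycleOf σ i₀) := by
          rw [← map_mul, hσeq]
        have e2 : Perm.sign τ = Perm.sign τ' * Perm.sign (cycleOf τ i₀) := by
          rw [← map_mul, hτeq]
        rw [e1, e2, hsign', hsc]

theorem sign_eq_of_Eset_eq {σ τ : Perm β} (h : Eset σ = Eset τ) :
    Perm.sign σ = Perm.sign τ :=
  sign_eq_of_Eset_eq_aux σ.support.card σ τ le_rfl h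

end PermSignAux


set_option maxHeartbeats 1000000
set_option synthInstance.maxHeartbeats 400000

namespace Stmt3Aux

open PeriodicGraph Polynomial

variable {d n : ℕ} (G : PeriodicGraph d n)

/-- The `ℕ`-coefficient analogue of `LaurentU`. -/
abbrev AN (G : PeriodicGraph d n) : Type _ :=
  AddMonoidAlgebra (MvPolynomial G.VarIdx ℕ) (Fin d → ℤ)

/-- Polynomials (in `λ`) over `AN`. -/
abbrev PN (G : PeriodicGraph d n) : Type _ := Polynomial (AN G)

/-- Coefficient cast `ℕ → ℂ` on multivariate polynomials. -/
def theta (G : PeriodicGraph d n) : MvPolynomial G.VarIdx ℕ →+* MvPolynomial G.VarIdx ℂ :=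
  MvPolynomial.map (Nat.castRingHom ℂ)

/-- Coefficient cast on Laurent polynomials. -/
def psi (G : PeriodicGraph d n) : AN G →+* G.LaurentU :=
  AddMonoidAlgebra.liftNCRingHom
    ((AddMonoidAlgebra.singleZeroRingHom).comp (theta G))
    (AddMonoidAlgebra.of (MvPolynomial G.VarIdx ℂ) (Fin d → ℤ))
    (fun _ _ => Commute.all _ _)

lemma psi_single (a : Fin d → ℤ) (r : MvPolynomial G.VarIdx ℕ) :
    psi G (AddMonoidAlgebra.single a r) = AddMonoidAlgebra.single a (theta G r) := by
  calc psi G (AddMonoidAlgebra.single a r)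
      = AddMonoidAlgebra.liftNC
          (((AddMonoidAlgebra.singleZeroRingHom).comp (theta G) :
            MvPolynomial G.VarIdx ℕ →+* G.LaurentU) : MvPolynomial G.VarIdx ℕ →+ G.LaurentU)
          (⇑(AddMonoidAlgebra.of (MvPolynomial G.VarIdx ℂ) (Fin d → ℤ)))
          (AddMonoidAlgebra.single a r) := rfl
    _ = AddMonoidAlgebra.single (0 : Fin d → ℤ) (theta G r) * AddMonoidAlgebra.single a 1 := by
          rw [AddMonoidAlgebra.liftNC_single]; rfl
    _ = AddMonoidAlgebra.single a (theta G r) := by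
          rw [AddMonoidAlgebra.single_mul_single, zero_add, mul_one]

lemma psi_apply (x : AN G) (α : Fin d → ℤ) : (psi G x).coeff α = theta G (x.coeff α) := by
  induction x using AddMonoidAlgebra.induction_linear with
  | zero => simp
  | add f g hf hg =>
      rw [map_add, AddMonoidAlgebra.coeff_add, AddMonoidAlgebra.coeff_add, Finsupp.add_apply,
        Finsupp.add_apply, hf, hg, map_add]
  | single a r =>
      rw [psi_single, AddMonoidAlgebra.coeff_single, AddMonoidAlgebra.coeff_single,
        Finsupp.single_apply, Finsupp.single_apply, apply_ite (theta G), map_zero]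

/-- `ℕ`-coefficient Floquet entries. -/
def fN (i j : Fin n) : AN G :=
  (if i = j then AddMonoidAlgebra.single 0 (MvPolynomial.X (Sum.inl i)) else 0) +
    ∑ a ∈ (G.edges i j).attach,
      AddMonoidAlgebra.single a.1 (MvPolynomial.X (G.edgeVar i j a.1 a.2))

/-- `ℕ`-coefficient matrix entry `L(z)_{ij} + δ_{ij} λ`. -/
def entN (i j : Fin n) : PN G :=
  Polynomial.C (fN G i j) + (if i = j then Polynomial.X else 0)

/-- `ℕ`-coefficient version of the `σ`-product. -/
def FN (σ : Equiv.Perm (Fin n)) : PN G := ∏ i, entN G i (σ i)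

lemma psi_fN (i j : Fin n) : psi G (fN G i j) = G.floquetU i j := by
  unfold fN floquetU
  rw [map_add, map_sum]
  congr 1
  · rw [apply_ite (psi G), map_zero, psi_single]
    simp [theta]
  · refine Finset.sum_congr rfl fun a _ => ?_
    rw [psi_single]
    simp [theta]

/-- The full ring homomorphism `PN → ℂ[v,e][z^{±1}][λ]`, `λ ↦ -λ`. -/
def chi (G : PeriodicGraph d n) : PN G →+* Polynomial G.LaurentU :=
  (Polynomial.eval₂RingHom (S := Polynomial G.LaurentU) (Polynomial.C) (-(Polynomial.X))).comp
    (Polynomial.mapRingHom (psi G))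

lemma chi_entN (i j : Fin n) : chi G (entN G i j) = G.dispMatU i j := by
  unfold chi entN
  rw [RingHom.comp_apply, map_add, map_add]
  have h1 : (Polynomial.mapRingHom (psi G)) (Polynomial.C (fN G i j)) =
      Polynomial.C (G.floquetU i j) := by
    rw [Polynomial.coe_mapRingHom, Polynomial.map_C, psi_fN]
  have h2 : (Polynomial.mapRingHom (psi G)) (if i = j then (Polynomial.X : PN G) else 0) =
      (if i = j then (Polynomial.X : Polynomial G.LaurentU) else 0) := by
    rw [apply_ite (Polynomial.mapRingHom (psi G)), map_zero, Polynomial.coe_mapRingHom,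
      Polynomial.map_X]
  rw [h1, h2]
  rw [Polynomial.coe_eval₂RingHom, Polynomial.eval₂_C,
    apply_ite (Polynomial.eval₂ Polynomial.C (-(Polynomial.X))), Polynomial.eval₂_X]
  have h3 : (Polynomial.eval₂ Polynomial.C (-(Polynomial.X)) (0 : Polynomial G.LaurentU)) = 0 :=
    Polynomial.eval₂_zero _ _
  rw [h3]
  unfold dispMatU
  split_ifs <;> ring

/-- Triple-coefficient extraction over `ℂ`, as an additive hom. -/
def ccHom (G : PeriodicGraph d n) (b : ℕ) (α : Fin d → ℤ) (m : G.VarIdx →₀ ℕ) :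
    Polynomial G.LaurentU →+ ℂ :=
  (MvPolynomial.coeffAddMonoidHom m).comp
    ((Finsupp.applyAddHom (M := MvPolynomial G.VarIdx ℂ) α).comp
      ((AddMonoidAlgebra.coeffAddEquiv (R := MvPolynomial G.VarIdx ℂ)
        (M := Fin d → ℤ)).toAddMonoidHom.comp
      (Polynomial.lcoeff G.LaurentU b).toAddMonoidHom))

lemma ccHom_apply (b : ℕ) (α : Fin d → ℤ) (m : G.VarIdx →₀ ℕ) (f : Polynomial G.LaurentU) :
    ccHom G b α m f = MvPolynomial.coeff m ((f.coeff b).coeff α) := rfl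

/-- Triple-coefficient extraction over `ℕ`. -/
def ccN (F : PN G) (b : ℕ) (α : Fin d → ℤ) (m : G.VarIdx →₀ ℕ) : ℕ :=
  MvPolynomial.coeff m ((F.coeff b).coeff α)

lemma coeff_comp_negX {R : Type*} [CommRing R] (p : Polynomial R) (b : ℕ) :
    (p.comp (-Polynomial.X)).coeff b = (-1 : ℤ) ^ b • p.coeff b := by
  induction p using Polynomial.induction_on' with
  | add p q hp hq => rw [Polynomial.add_comp, Polynomial.coeff_add, hp, hq,
      Polynomial.coeff_add, smul_add]
  | monomial k a =>
      rw [← Polynomial.C_mul_X_pow_eq_monomial, Polynomial.mul_comp, Polynomial.C_comp,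
        Polynomial.pow_comp, Polynomial.X_comp, neg_pow]
      rw [show ((-1 : Polynomial R) ^ k * Polynomial.X ^ k) =
        Polynomial.C ((-1 : R) ^ k) * Polynomial.X ^ k by rw [← Polynomial.C_1, ← Polynomial.C_neg,
          ← Polynomial.C_pow]]
      rw [← mul_assoc, ← Polynomial.C_mul, Polynomial.coeff_C_mul, Polynomial.coeff_C_mul,
        Polynomial.coeff_X_pow]
      by_cases hbk : b = k
      · subst hbk
        simp only [if_pos rfl, mul_one, zsmul_eq_mul]
        push_cast
        ring
      · simp [hbk]

lemma cc_chi (F : PN G) (b : ℕ) (α : Fin d → ℤ) (m : G.VarIdx →₀ ℕ) :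
    ccHom G b α m (chi G F) = (-1 : ℂ) ^ b * (ccN G F b α m : ℂ) := by
  have h1 : chi G F = (F.map (psi G)).comp (-Polynomial.X) := rfl
  rw [h1, ccHom_apply, coeff_comp_negX, Polynomial.coeff_map]
  rw [AddMonoidAlgebra.coeff_smul_apply, MvPolynomial.coeff_smul, psi_apply]
  rw [show theta G ((F.coeff b).coeff α) = MvPolynomial.map (Nat.castRingHom ℂ) ((F.coeff b).coeff α) from rfl,
    MvPolynomial.coeff_map]
  rw [zsmul_eq_mul, ccN]
  push_cast
  ring

lemma permProdU_chi (τ : Equiv.Perm (Fin n)) : G.permProdU τ = chi G (FN G τ) := by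
  unfold PeriodicGraph.permProdU FN
  rw [map_prod]
  exact Finset.prod_congr rfl fun i _ => (chi_entN G i (τ i)).symm

lemma dispU_sum : G.dispU = ∑ τ : Equiv.Perm (Fin n),
    (((Equiv.Perm.sign τ : ℤ) : Polynomial G.LaurentU)) * G.permProdU τ := by
  unfold PeriodicGraph.dispU
  rw [← Matrix.det_transpose, Matrix.det_apply']
  refine Finset.sum_congr rfl fun τ _ => ?_
  unfold PeriodicGraph.permProdU
  congr 1

lemma ccN_one {b : ℕ} {α : Fin d → ℤ} {m : G.VarIdx →₀ ℕ}
    (h : ccN G 1 b α m ≠ 0) : b = 0 ∧ α = 0 ∧ m = 0 := by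
  unfold ccN at h
  rw [Polynomial.coeff_one] at h
  by_cases hb : b = 0
  · subst hb
    rw [if_pos rfl] at h
    rw [AddMonoidAlgebra.one_def, AddMonoidAlgebra.coeff_single, Finsupp.single_apply] at h
    by_cases hα : (0 : Fin d → ℤ) = α
    · rw [if_pos hα] at h
      rw [MvPolynomial.coeff_one] at h
      by_cases hm : (0 : G.VarIdx →₀ ℕ) = m
      · exact ⟨rfl, hα.symm, hm.symm⟩
      · rw [if_neg hm] at h; exact absurd rfl h
    · rw [if_neg hα] at h; simp at h
  · rw [if_neg hb] at h; simp at h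

lemma ccN_mul {F F' : PN G} {b : ℕ} {α : Fin d → ℤ} {m : G.VarIdx →₀ ℕ}
    (h : ccN G (F * F') b α m ≠ 0) :
    ∃ b1 b2 α1 α2 m1 m2, b1 + b2 = b ∧ α1 + α2 = α ∧ m1 + m2 = m ∧
      ccN G F b1 α1 m1 ≠ 0 ∧ ccN G F' b2 α2 m2 ≠ 0 := by
  unfold ccN at h
  rw [Polynomial.coeff_mul, AddMonoidAlgebra.coeff_sum, Finsupp.finset_sum_apply,
    MvPolynomial.coeff_sum] at h
  obtain ⟨p, hp, hne⟩ := Finset.exists_ne_zero_of_sum_ne_zero h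
  rw [AddMonoidAlgebra.coeff_mul] at hne
  simp only [Finsupp.sum] at hne
  rw [MvPolynomial.coeff_sum] at hne
  obtain ⟨a1, _, hne1⟩ := Finset.exists_ne_zero_of_sum_ne_zero hne
  rw [MvPolynomial.coeff_sum] at hne1
  obtain ⟨a2, _, hne2⟩ := Finset.exists_ne_zero_of_sum_ne_zero hne1
  by_cases hsum : a1 + a2 = α
  swap
  · rw [if_neg hsum] at hne2; simp at hne2
  rw [if_pos hsum] at hne2
  rw [MvPolynomial.coeff_mul] at hne2
  obtain ⟨q, hq, hne3⟩ := Finset.exists_ne_zero_of_sum_ne_zero hne2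
  exact ⟨p.1, p.2, a1, a2, q.1, q.2, Finset.HasAntidiagonal.mem_antidiagonal.mp hp, hsum,
    Finset.HasAntidiagonal.mem_antidiagonal.mp hq, left_ne_zero_of_mul hne3, right_ne_zero_of_mul hne3⟩

lemma ccN_prod {ι : Type*} (s : Finset ι) (F : ι → PN G) :
    ∀ (b : ℕ) (α : Fin d → ℤ) (m : G.VarIdx →₀ ℕ), ccN G (∏ i ∈ s, F i) b α m ≠ 0 →
      ∃ (bf : ι → ℕ) (αf : ι → (Fin d → ℤ)) (mf : ι → (G.VarIdx →₀ ℕ)),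
        (∑ i ∈ s, bf i) = b ∧ (∑ i ∈ s, αf i) = α ∧ (∑ i ∈ s, mf i) = m ∧
        ∀ i ∈ s, ccN G (F i) (bf i) (αf i) (mf i) ≠ 0 := by
  induction s using Finset.cons_induction with
  | empty =>
      intro b α m h
      rw [Finset.prod_empty] at h
      obtain ⟨rfl, rfl, rfl⟩ := ccN_one G h
      exact ⟨fun _ => 0, fun _ => 0, fun _ => 0, by simp, by simp, by simp,
        fun i hi => absurd hi (Finset.notMem_empty i)⟩
  | cons a s ha ih =>
      intro b α m h
      rw [Finset.prod_cons] at h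
      obtain ⟨b1, b2, α1, α2, m1, m2, hb, hα, hm, h1, h2⟩ := ccN_mul G h
      obtain ⟨bf, αf, mf, hbs, hαs, hms, hall⟩ := ih b2 α2 m2 h2
      refine ⟨Function.update bf a b1, Function.update αf a α1, Function.update mf a m1,
        ?_, ?_, ?_, ?_⟩
      · rw [Finset.sum_cons, Function.update_self,
          Finset.sum_congr rfl fun i hi => Function.update_of_ne (ne_of_mem_of_not_mem hi ha) _ _,
          hbs, hb]
      · rw [Finset.sum_cons, Function.update_self,
          Finset.sum_congr rfl fun i hi => Function.update_of_ne (ne_of_mem_of_not_mem hi ha) _ _,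
          hαs, hα]
      · rw [Finset.sum_cons, Function.update_self,
          Finset.sum_congr rfl fun i hi => Function.update_of_ne (ne_of_mem_of_not_mem hi ha) _ _,
          hms, hm]
      · intro i hi
        rcases Finset.mem_cons.mp hi with rfl | hi'
        · rw [Function.update_self, Function.update_self, Function.update_self]; exact h1
        · rw [Function.update_of_ne (ne_of_mem_of_not_mem hi' ha),
            Function.update_of_ne (ne_of_mem_of_not_mem hi' ha),
            Function.update_of_ne (ne_of_mem_of_not_mem hi' ha)]
          exact hall i hi'

lemma entN_cases {i j : Fin n} {b : ℕ} {α : Fin d → ℤ} {m : G.VarIdx →₀ ℕ}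
    (h : ccN G (entN G i j) b α m ≠ 0) :
    (b = 1 ∧ i = j ∧ α = 0 ∧ m = 0) ∨
    (b = 0 ∧ i = j ∧ α = 0 ∧ m = Finsupp.single (Sum.inl i) 1) ∨
    (b = 0 ∧ ∃ h' : α ∈ G.edges i j, m = Finsupp.single (G.edgeVar i j α h') 1) := by
  unfold ccN entN at h
  rw [Polynomial.coeff_add, Polynomial.coeff_C] at h
  by_cases hb0 : b = 0
  · subst hb0
    rw [if_pos rfl] at h
    rw [show (if i = j then (Polynomial.X : PN G) else 0).coeff 0 = 0 by
      split_ifs <;> simp] at h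
    rw [add_zero] at h
    unfold fN at h
    rw [AddMonoidAlgebra.coeff_add, Finsupp.add_apply, MvPolynomial.coeff_add] at h
    have hor : MvPolynomial.coeff m
        ((if i = j then AddMonoidAlgebra.single (0 : Fin d → ℤ)
          (MvPolynomial.X (Sum.inl i) : MvPolynomial G.VarIdx ℕ) else 0).coeff α) ≠ 0 ∨
        MvPolynomial.coeff m ((∑ a ∈ (G.edges i j).attach,
          AddMonoidAlgebra.single a.1
            (MvPolynomial.X (G.edgeVar i j a.1 a.2) : MvPolynomial G.VarIdx ℕ)).coeff α) ≠ 0 := by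
      by_contra hc
      push_neg at hc
      rw [hc.1, hc.2] at h
      exact h rfl
    rcases hor with hA | hB
    · by_cases hij : i = j
      · rw [if_pos hij, AddMonoidAlgebra.coeff_single, Finsupp.single_apply] at hA
        by_cases hα : (0 : Fin d → ℤ) = α
        · rw [if_pos hα, MvPolynomial.coeff_X'] at hA
          by_cases hm : Finsupp.single (Sum.inl i : G.VarIdx) 1 = m
          · exact Or.inr (Or.inl ⟨rfl, hij, hα.symm, hm.symm⟩)
          · rw [if_neg hm] at hA; exact absurd rfl hA
        · rw [if_neg hα] at hA; simp at hA
      · rw [if_neg hij] at hA; simp at hA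
    · rw [AddMonoidAlgebra.coeff_sum, Finsupp.finset_sum_apply, MvPolynomial.coeff_sum] at hB
      obtain ⟨⟨av, hav⟩, _, hne⟩ := Finset.exists_ne_zero_of_sum_ne_zero hB
      rw [AddMonoidAlgebra.coeff_single, Finsupp.single_apply] at hne
      by_cases ha : av = α
      · subst ha
        rw [if_pos rfl, MvPolynomial.coeff_X'] at hne
        by_cases hm : Finsupp.single (G.edgeVar i j av hav) 1 = m
        · exact Or.inr (Or.inr ⟨rfl, hav, hm.symm⟩)
        · rw [if_neg hm] at hne; exact absurd rfl hne
      · rw [if_neg ha] at hne; simp at hne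
  by_cases hb1 : b = 1
  · subst hb1
    rw [if_neg one_ne_zero] at h
    by_cases hij : i = j
    · rw [if_pos hij, Polynomial.coeff_X_one, zero_add] at h
      rw [AddMonoidAlgebra.one_def, AddMonoidAlgebra.coeff_single, Finsupp.single_apply] at h
      by_cases hα : (0 : Fin d → ℤ) = α
      · rw [if_pos hα, MvPolynomial.coeff_one] at h
        by_cases hm : (0 : G.VarIdx →₀ ℕ) = m
        · exact Or.inl ⟨rfl, hij, hα.symm, hm.symm⟩
        · rw [if_neg hm] at h; exact absurd rfl h
      · rw [if_neg hα] at h; simp at h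
    · exfalso; rw [if_neg hij] at h; simp at h
  · exfalso
    rw [if_neg hb0] at h
    rw [show (if i = j then (Polynomial.X : PN G) else 0).coeff b = 0 by
      split_ifs <;> simp [Polynomial.coeff_X, Ne.symm hb1, hb1]] at h
    simp at h

/-- Endpoints of an edge-variable class. -/
def qe (G : PeriodicGraph d n) : G.EdgeVar → Sym2 (Fin n) :=
  Quotient.lift (fun x : G.DirEdge => s(x.1.1, x.1.2.1)) (by
    rintro x y (rfl | rfl)
    · rfl
    · exact Sym2.eq_swap.symm)

lemma qe_mk (i j : Fin n) (a : Fin d → ℤ) (h : a ∈ G.edges i j) :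
    qe G (Quotient.mk G.edgeSetoid ⟨(i, j, a), h⟩) = s(i, j) := rfl

/-- The set of non-diagonal edges appearing in a monomial `m`. -/
def Em (G : PeriodicGraph d n) (m : G.VarIdx →₀ ℕ) : Set (Sym2 (Fin n)) :=
  {e | ¬ e.IsDiag ∧ ∃ c : G.EdgeVar, m (Sum.inr c) ≠ 0 ∧ qe G c = e}

lemma Eset_eq_Em {σ : Equiv.Perm (Fin n)} {b : ℕ} {α : Fin d → ℤ} {m : G.VarIdx →₀ ℕ}
    (h : ccN G (FN G σ) b α m ≠ 0) :
    PermSignAux.Eset σ = Em G m := by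
  obtain ⟨bf, αf, mf, hb, hα, hm, hall⟩ := ccN_prod G Finset.univ (fun i => entN G i (σ i)) b α m h
  have hmval : ∀ w : G.VarIdx, m w = ∑ i, mf i w := by
    intro w
    rw [← hm, Finsupp.finset_sum_apply]
  ext e
  constructor
  · rintro ⟨i, hi, rfl⟩
    rcases entN_cases G (hall i (Finset.mem_univ i)) with ⟨_, hij, _⟩ | ⟨_, hij, _⟩ | ⟨_, h', hmf⟩
    · exact absurd hij.symm hi
    · exact absurd hij.symm hi
    · refine ⟨by rw [Sym2.mk_isDiag_iff]; exact fun e' => hi e'.symm,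
        Quotient.mk G.edgeSetoid ⟨(i, σ i, αf i), h'⟩, ?_, qe_mk G i (σ i) (αf i) h'⟩
      rw [hmval]
      intro hzero
      rw [Finset.sum_eq_zero_iff] at hzero
      have := hzero i (Finset.mem_univ i)
      rw [hmf] at this
      unfold PeriodicGraph.edgeVar at this
      rw [Finsupp.single_apply, if_pos rfl] at this
      exact one_ne_zero this
  · rintro ⟨hdiag, c, hc, rfl⟩
    rw [hmval] at hc
    obtain ⟨i, _, hne⟩ := Finset.exists_ne_zero_of_sum_ne_zero hc
    rcases entN_cases G (hall i (Finset.mem_univ i)) with ⟨_, hij, _, hmf⟩ |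
        ⟨_, hij, _, hmf⟩ | ⟨_, h', hmf⟩
    · rw [hmf] at hne; simp at hne
    · rw [hmf, Finsupp.single_apply] at hne
      rw [if_neg (by simp)] at hne
      exact absurd rfl hne
    · rw [hmf] at hne
      unfold PeriodicGraph.edgeVar at hne
      rw [Finsupp.single_apply] at hne
      have hceq : Quotient.mk G.edgeSetoid ⟨(i, σ i, αf i), h'⟩ = c := by
        by_contra hcc
        rw [if_neg (by simpa using hcc)] at hne
        exact hne rfl
      refine ⟨i, ?_, ?_⟩
      · intro he
        apply hdiag
        rw [← hceq, qe_mk]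
        rw [Sym2.mk_isDiag_iff]
        exact he.symm
      · rw [← hceq, qe_mk]

end Stmt3Aux


open PeriodicGraph in
/-- For every permutation `σ` of `[n]`, the generic support
of `σD(z,λ)` is contained in the generic support of `D(z,λ)`. -/
theorem genSupp_permProd_subset {d n : ℕ} (G : PeriodicGraph d n)
    (σ : Equiv.Perm (Fin n)) :
    genSupp (G.permProdU σ) ⊆ genSupp G.dispU := by
  rintro ⟨α, b⟩ hp
  simp only [genSupp, Set.mem_setOf_eq] at hp ⊢
  obtain ⟨m, hm⟩ := MvPolynomial.ne_zero_iff.mp hp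
  have hNσ : Stmt3Aux.ccN G (Stmt3Aux.FN G σ) b α m ≠ 0 := by
    intro h0
    apply hm
    have h1 : Stmt3Aux.ccHom G b α m (G.permProdU σ) = 0 := by
      rw [Stmt3Aux.permProdU_chi, Stmt3Aux.cc_chi, h0]
      simp
    rw [Stmt3Aux.ccHom_apply] at h1
    exact h1
  have hcoh : ∀ τ : Equiv.Perm (Fin n), Stmt3Aux.ccN G (Stmt3Aux.FN G τ) b α m ≠ 0 →
      Equiv.Perm.sign τ = Equiv.Perm.sign σ := fun τ hτ =>
    PermSignAux.sign_eq_of_Eset_eq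
      ((Stmt3Aux.Eset_eq_Em G hτ).trans (Stmt3Aux.Eset_eq_Em G hNσ).symm)
  have hterm : ∀ τ : Equiv.Perm (Fin n),
      Stmt3Aux.ccHom G b α m
          (((Equiv.Perm.sign τ : ℤ) : Polynomial G.LaurentU) * G.permProdU τ) =
        ((Equiv.Perm.sign τ : ℤ) : ℂ) *
          ((-1 : ℂ) ^ b * (Stmt3Aux.ccN G (Stmt3Aux.FN G τ) b α m : ℂ)) := by
    intro τ
    rcases Int.units_eq_one_or (Equiv.Perm.sign τ) with h' | h' <;> rw [h']
    · have hc : (((1 : ℤˣ) : ℤ) : Polynomial G.LaurentU) = 1 := by norm_num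
      rw [hc, one_mul, Stmt3Aux.permProdU_chi, Stmt3Aux.cc_chi]
      norm_num
    · have hc : (((-1 : ℤˣ) : ℤ) : Polynomial G.LaurentU) = -1 := by norm_num
      rw [hc]
      rw [show (-1 : Polynomial G.LaurentU) * G.permProdU τ = -(G.permProdU τ) by ring]
      have hneg := (Stmt3Aux.ccHom G b α m).map_neg (G.permProdU τ)
      rw [hneg, Stmt3Aux.permProdU_chi, Stmt3Aux.cc_chi]
      have hc2 : (((-1 : ℤˣ) : ℤ) : ℂ) = -1 := by norm_num
      rw [hc2]
      ring
  have hdet : Stmt3Aux.ccHom G b α m G.dispU =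
      ((Equiv.Perm.sign σ : ℤ) : ℂ) * ((-1 : ℂ) ^ b *
        ((∑ τ : Equiv.Perm (Fin n), Stmt3Aux.ccN G (Stmt3Aux.FN G τ) b α m : ℕ) : ℂ)) := by
    rw [Stmt3Aux.dispU_sum, map_sum, Nat.cast_sum, Finset.mul_sum, Finset.mul_sum]
    refine Finset.sum_congr rfl fun τ _ => ?_
    rw [hterm τ]
    by_cases hτ : Stmt3Aux.ccN G (Stmt3Aux.FN G τ) b α m = 0
    · rw [hτ]; simp
    · rw [hcoh τ hτ]
  intro h0
  have hzero : Stmt3Aux.ccHom G b α m G.dispU = 0 := by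
    rw [Stmt3Aux.ccHom_apply, h0]
    simp
  rw [hdet] at hzero
  have h1 : ((Equiv.Perm.sign σ : ℤ) : ℂ) ≠ 0 := by
    rcases Int.units_eq_one_or (Equiv.Perm.sign σ) with h' | h' <;> rw [h'] <;> norm_num
  have h2 : ((-1 : ℂ) ^ b) ≠ 0 := pow_ne_zero _ (by norm_num)
  have h3 : ((∑ τ : Equiv.Perm (Fin n), Stmt3Aux.ccN G (Stmt3Aux.FN G τ) b α m : ℕ) : ℂ) ≠ 0 := by
    rw [Nat.cast_ne_zero]
    intro hs
    rw [Finset.sum_eq_zero_iff] at hs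
    exact hNσ (hs σ (Finset.mem_univ σ))
  exact (mul_ne_zero h1 (mul_ne_zero h2 h3)) hzero
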